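/- The assignment a_i ↦ A_{n−i+1} extends uniquely to a monoid homomorphism ψ_n from the Kiselman semigroup K_n to n×n integer matrices, where A_i is the matrix equal to the identity except that its i-th row is zero and its i-th column is (1,...,1,0,...,0)^t with the first i−1 entries equal to 1. Moreover ψ_n maps the zero element e_{{1,...,n}} to the zero matrix. -/

import Mathlib

/-- The defining relations of the Kiselman semigroup `K_n`:
`aᵢ² = aᵢ`, and `aᵢaⱼaᵢ = aⱼaᵢaⱼ = aⱼaᵢ` for `i < j`. -/
inductive KisRel (n : ℕ) : FreeMonoid (Fin n) → FreeMonoid (Fin n) → Prop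
  | idem (i : Fin n) : KisRel n (.of i * .of i) (.of i)
  | braid₁ {i j : Fin n} (h : i < j) :
      KisRel n (.of i * .of j * .of i) (.of j * .of i)
  | braid₂ {i j : Fin n} (h : i < j) :
      KisRel n (.of j * .of i * .of j) (.of j * .of i)

/-- The Kiselman semigroup (monoid) `K_n`. -/
abbrev Kiselman (n : ℕ) := PresentedMonoid (KisRel n)

/-- The canonical projection from the free monoid on the generators to `K_n`. -/
def kmk (n : ℕ) : FreeMonoid (Fin n) →* Kiselman n := PresentedMonoid.mk (KisRel n)

/-- The generator `a_{i+1}` (0-indexed: `ka i` is the paper's `a_{i+1}`). -/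
def ka {n : ℕ} (i : Fin n) : Kiselman n := PresentedMonoid.of (KisRel n) i

/-- The idempotent `e_X`: the product of the generators indexed by `X` in strictly
decreasing order of indices. -/
def eX {n : ℕ} (X : Finset (Fin n)) : Kiselman n :=
  kmk n (FreeMonoid.ofList ((X.sort (· ≤ ·)).reverse))

/-- The matrix `A_i` (0-indexed: `Amat n i` is the paper's `A_{i+1}`): the identity
matrix except that row `i` is zero and column `i` is `(1,…,1,0,…,0)ᵗ` with ones
exactly in the rows `< i`. -/
def Amat (n : ℕ) (i : Fin n) : Matrix (Fin n) (Fin n) ℤ := fun r c =>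
  if r = i then 0 else if c = i then (if r < i then 1 else 0) else if r = c then 1 else 0

/-- Proposition 1: `aᵢ ↦ A_{n-i+1}` extends uniquely to a monoid homomorphism
`ψₙ : K_n → Matₙ(ℤ)`, and `ψₙ(e_{{1,…,n}}) = 0`. -/
lemma Amat_mul_apply {n : ℕ} (u : Fin n) (M : Matrix (Fin n) (Fin n) ℤ) (r c : Fin n) :
    (Amat n u * M) r c = if r = u then 0 else (if r < u then M u c else 0) + M r c := by
  rw [Matrix.mul_apply]
  by_cases hr : r = u
  · simp [hr, Amat]
  · have key : ∀ j : Fin n, Amat n u r j * M j c =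
        (if j = u then (if r < u then M j c else 0) else 0) + (if j = r then M j c else 0) := by
      intro j
      by_cases hju : j = u <;> by_cases hjr : j = r <;> simp_all [Amat, eq_comm]
    rw [Finset.sum_congr rfl (fun j _ => key j), Finset.sum_add_distrib]
    simp [hr, Finset.sum_ite_eq']

lemma Amat_idem {n : ℕ} (u : Fin n) : Amat n u * Amat n u = Amat n u := by
  funext r c
  rw [Amat_mul_apply]
  by_cases hr : r = u <;> simp [Amat, hr]

lemma Amat_braid1 {n : ℕ} {u v : Fin n} (h : v < u) :
    Amat n u * (Amat n v * Amat n u) = Amat n v * Amat n u := by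
  funext r c
  rw [Amat_mul_apply]
  have h1 : (Amat n v * Amat n u) u c = 0 := by
    rw [Amat_mul_apply]
    simp [h.ne', not_lt.2 h.le, Amat]
  by_cases hr : r = u
  · simp [hr, h1]
  · simp [hr, h1]

lemma Amat_braid2 {n : ℕ} {u v : Fin n} (h : v < u) :
    Amat n v * (Amat n u * Amat n v) = Amat n v * Amat n u := by
  funext r c
  rw [Amat_mul_apply, Amat_mul_apply, Amat_mul_apply, Amat_mul_apply]
  have h' : (v:ℕ) < u := h
  simp only [Amat]
  split_ifs <;> first
    | rfl
    | (simp only [Fin.lt_def, Fin.ext_iff] at *; omega)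

lemma kis_rel_holds (n : ℕ) : ∀ a b : FreeMonoid (Fin n), KisRel n a b →
    FreeMonoid.lift (fun i : Fin n => Amat n i.rev) a =
    FreeMonoid.lift (fun i : Fin n => Amat n i.rev) b := by
  intro a b hr
  cases hr with
  | idem i => simp only [map_mul, FreeMonoid.lift_eval_of]; exact Amat_idem _
  | braid₁ h =>
      have hv : Fin.rev _ < Fin.rev _ := Fin.rev_lt_rev.mpr h
      simp only [map_mul, FreeMonoid.lift_eval_of, mul_assoc]
      exact Amat_braid1 hv
  | braid₂ h =>
      have hv : Fin.rev _ < Fin.rev _ := Fin.rev_lt_rev.mpr h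
      simp only [map_mul, FreeMonoid.lift_eval_of, mul_assoc]
      exact Amat_braid2 hv

lemma prod_take (n : ℕ) : ∀ k, k ≤ n → (((List.finRange n).take k).map (Amat n)).prod =
    (fun r c => if r = c ∧ k ≤ (r : ℕ) then (1 : ℤ) else 0 : Matrix (Fin n) (Fin n) ℤ)
  | 0, _ => by
      funext r c
      simp [Matrix.one_apply]
  | k + 1, hk => by
      have hklt : k < n := hk
      rw [List.take_succ]
      have hget : (List.finRange n)[k]? = some ⟨k, hklt⟩ := by
        rw [List.getElem?_eq_getElem (by simpa using hklt)]
        simp [List.getElem_finRange, Fin.ext_iff]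
      rw [hget]
      simp only [Option.toList_some, List.map_append, List.prod_append, List.map_cons,
        List.map_nil, List.prod_cons, List.prod_nil, mul_one]
      rw [prod_take n k (le_of_lt hklt)]
      funext r c
      show (∑ j, (if r = j ∧ k ≤ (r : ℕ) then (1:ℤ) else 0) * Amat n ⟨k, hklt⟩ j c) = _
      have key : ∀ j : Fin n, (if r = j ∧ k ≤ (r : ℕ) then (1:ℤ) else 0) * Amat n ⟨k, hklt⟩ j c
          = if j = r then (if k ≤ (r : ℕ) then Amat n ⟨k, hklt⟩ r c else 0) else 0 := by
        intro j
        by_cases hj : j = r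
        · subst hj; by_cases h2 : k ≤ (j : ℕ) <;> simp [h2]
        · simp [hj, Ne.symm hj]
      rw [Finset.sum_congr rfl (fun j _ => key j), Finset.sum_ite_eq' Finset.univ r]
      simp only [Finset.mem_univ, if_true, Amat]
      split_ifs <;> first
        | rfl
        | (simp only [Fin.lt_def, Fin.ext_iff] at *; omega)

lemma prod_all (n : ℕ) : (((List.finRange n)).map (Amat n)).prod = 0 := by
  have := prod_take n n le_rfl
  rw [List.take_of_length_le (by simp)] at this
  rw [this]
  funext r c
  have := r.is_lt
  split_ifs with h
  · omega
  · rfl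

lemma hom_ofList {n : ℕ} (ψ : Kiselman n →* Matrix (Fin n) (Fin n) ℤ)
    (l : List (Fin n)) :
    ψ (kmk n (FreeMonoid.ofList l)) = (l.map (fun i => ψ (ka i))).prod := by
  induction l with
  | nil => simp [FreeMonoid.ofList_nil]
  | cons a l ih =>
      rw [FreeMonoid.ofList_cons, map_mul, map_mul, List.map_cons, List.prod_cons, ih]
      rfl

theorem kiselman_representation (n : ℕ) :
    (∃! ψ : Kiselman n →* Matrix (Fin n) (Fin n) ℤ,
      ∀ i : Fin n, ψ (ka i) = Amat n i.rev) ∧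
    (∀ ψ : Kiselman n →* Matrix (Fin n) (Fin n) ℤ,
      (∀ i : Fin n, ψ (ka i) = Amat n i.rev) → ψ (eX Finset.univ) = 0) := by
  constructor
  · refine ⟨PresentedMonoid.lift _ (kis_rel_holds n), fun i => rfl, fun φ hφ => ?_⟩
    exact PresentedMonoid.ext (KisRel n) (fun x => hφ x)
  · intro ψ hψ
    have : ψ (eX Finset.univ) =
        (((Finset.univ.sort (· ≤ ·) : List (Fin n)).reverse).map (fun i => ψ (ka i))).prod :=
      hom_ofList ψ _
    rw [this]
    have hs : (Finset.univ.sort (· ≤ ·) : List (Fin n)) = List.finRange n := Fin.sort_univ n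
    rw [hs, List.finRange_reverse, List.map_map]
    have : ((fun i => ψ (ka i)) ∘ Fin.rev : Fin n → Matrix (Fin n) (Fin n) ℤ)
        = Amat n := by
      funext i
      simp [Function.comp, hψ, Fin.rev_rev]
    rw [this, prod_all]
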